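/- Let E be a finite-dimensional real inner product space, u : E × ℝ → E a velocity field, μ : E × ℝ → ℝ, and let k > 0, ν > 0. Suppose c̄ : E × ℝ → ℝ is differentiable at a point (x, t) and its material derivative there equals kμ(x,t), i.e., the Fréchet derivative of c̄ at (x,t) applied to the direction (u(x,t), 1) equals k·μ(x,t). Then the function c := p ↦ ν(1 − exp(−c̄(p)/k)) is differentiable at (x,t) and its material derivative at (x,t) equals μ(x,t)·(ν − c(x,t)); that is, c satisfies the advection–reaction equation ∂c/∂t + u·∇c = μ(ν − c) at (x,t). -/

import Mathlib

/-- If the transformed variable `c̄` satisfies the transformed advection–reaction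
equation `∂c̄/∂t + u·∇c̄ = k μ` at `(x, t)` (stated via the Fréchet derivative in
the direction `(u (x,t), 1)`), then `c := ν (1 - exp (-c̄ / k))` is differentiable
at `(x, t)` and satisfies the advection–reaction equation
`∂c/∂t + u·∇c = μ (ν - c)` there. -/
theorem transformed_equation_implies_advection_reaction
    {E : Type*} [NormedAddCommGroup E] [InnerProductSpace ℝ E]
    [FiniteDimensional ℝ E]
    (u : E × ℝ → E) (μ : E × ℝ → ℝ) (k ν : ℝ) (hk : 0 < k) (hν : 0 < ν)
    (cb : E × ℝ → ℝ) (x : E) (t : ℝ)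
    (hdiff : DifferentiableAt ℝ cb (x, t))
    (heq : fderiv ℝ cb (x, t) (u (x, t), 1) = k * μ (x, t)) :
    DifferentiableAt ℝ (fun p => ν * (1 - Real.exp (-(cb p) / k))) (x, t) ∧
    fderiv ℝ (fun p => ν * (1 - Real.exp (-(cb p) / k))) (x, t) (u (x, t), 1)
      = μ (x, t) * (ν - ν * (1 - Real.exp (-(cb (x, t)) / k))) := by
  have hc : HasFDerivAt cb (fderiv ℝ cb (x, t)) (x, t) := hdiff.hasFDerivAt
  have h1 : HasFDerivAt (fun p => -(cb p) / k)
      ((-k⁻¹) • fderiv ℝ cb (x, t)) (x, t) := by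
    refine (hc.const_mul (-k⁻¹)).congr_of_eventuallyEq ?_
    exact Filter.Eventually.of_forall fun p => by ring
  have h2 := h1.exp
  have h3 := h2.const_sub 1
  have h4 := h3.const_mul ν
  refine ⟨h4.differentiableAt, ?_⟩
  rw [h4.fderiv]
  simp only [ContinuousLinearMap.smul_apply, ContinuousLinearMap.neg_apply,
    smul_eq_mul, heq]
  field_simp
  ring
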